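/- arXiv:1206.2506 — 2 statements merged into one kernel-verified Lean document; each statement's English description precedes it below -/
import Mathlib

section
/- Let H be a finite-dimensional complex inner product space, let d_1, …, d_m ∈ H be linearly independent, and let A_1, …, A_r be linear operators on H satisfying ∑_{s=1}^r A_s* A_s = ∑_{k=1}^m |d_k⟩⟨d_k|. Then there exist vectors φ_{ks} ∈ H (1 ≤ k ≤ m, 1 ≤ s ≤ r) such that A_s = ∑_{k=1}^m |φ_{ks}⟩⟨d_k| for every s, and ∑_{s=1}^r ⟨φ_{ks}, φ_{ls}⟩ = δ_{kl} for all k, l. -/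
/-- The rank-one operator `|u⟩⟨v| : ψ ↦ ⟨v, ψ⟩ u` (inner product conjugate-linear in the
first argument, linear in the second). -/
noncomputable def rankOne {H : Type*} [NormedAddCommGroup H] [InnerProductSpace ℂ H]
    (u v : H) : H →ₗ[ℂ] H where
  toFun ψ := (inner ℂ v ψ : ℂ) • u
  map_add' x y := by simp [inner_add_right, add_smul]
  map_smul' c x := by simp [inner_smul_right, smul_smul]

@[simp] lemma rankOne_apply {H : Type*} [NormedAddCommGroup H] [InnerProductSpace ℂ H]
    (u v ψ : H) : rankOne u v ψ = (inner ℂ v ψ : ℂ) • u := rfl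

/-- discrete case of Theorem 1: if `d_1, …, d_m` are linearly independent and
`∑_s A_s* A_s = ∑_k |d_k⟩⟨d_k|`, then there are vectors `φ_{ks}` with
`A_s = ∑_k |φ_{ks}⟩⟨d_k|` and `∑_s ⟨φ_{ks}, φ_{ls}⟩ = δ_{kl}`. -/
theorem stmt_3 {H : Type*} [NormedAddCommGroup H] [InnerProductSpace ℂ H]
    [FiniteDimensional ℂ H] (m r : ℕ) (d : Fin m → H)
    (hd : LinearIndependent ℂ d)
    (A : Fin r → (H →ₗ[ℂ] H))
    (hA : ∑ s : Fin r, LinearMap.adjoint (A s) ∘ₗ A s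
      = ∑ k : Fin m, rankOne (d k) (d k)) :
    ∃ φ : Fin m → Fin r → H,
      (∀ s, A s = ∑ k : Fin m, rankOne (φ k s) (d k)) ∧
      (∀ k l : Fin m,
        ∑ s : Fin r, (inner ℂ (φ k s) (φ l s) : ℂ) = if k = l then 1 else 0) := by
  classical
  set V : Submodule ℂ H := Submodule.span ℂ (Set.range d) with hV
  let b : Module.Basis (Fin m) ℂ V := Module.Basis.span hd
  let c : Fin m → H :=
    fun k => ((InnerProductSpace.toDual ℂ V).symm ((b.coord k).toContinuousLinearMap) : V)
  have hcV : ∀ k, c k ∈ V := fun k =>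
    ((InnerProductSpace.toDual ℂ V).symm ((b.coord k).toContinuousLinearMap)).2
  have hdV : ∀ j, d j ∈ V := fun j => Submodule.subset_span ⟨j, rfl⟩
  have hc : ∀ k j, (inner ℂ (c k) (d j) : ℂ) = if k = j then 1 else 0 := by
    intro k j
    have h1 : (⟨d j, hdV j⟩ : V) = b j := by
      apply Subtype.ext
      exact congrArg Subtype.val (Module.Basis.span_apply hd j).symm
    have h2 : (inner ℂ ((InnerProductSpace.toDual ℂ V).symm ((b.coord k).toContinuousLinearMap))
        (⟨d j, hdV j⟩ : V) : ℂ) = (b.coord k).toContinuousLinearMap ⟨d j, hdV j⟩ :=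
      InnerProductSpace.toDual_symm_apply
    rw [h1] at h2
    have h3 : (inner ℂ (c k) (d j) : ℂ)
        = (inner ℂ ((InnerProductSpace.toDual ℂ V).symm ((b.coord k).toContinuousLinearMap)) (b j) : ℂ) := by
      rw [← h1]
      rfl
    rw [h3, h2]
    simp [Module.Basis.coord_apply, Finsupp.single_apply, eq_comm]
  have hc' : ∀ k j, (inner ℂ (d j) (c k) : ℂ) = if k = j then 1 else 0 := by
    intro k j
    rw [← inner_conj_symm, hc]
    split_ifs <;> simp
  have hker : ∀ s (ψ : H), (∀ k, (inner ℂ (d k) ψ : ℂ) = 0) → A s ψ = 0 := by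
    intro s ψ hψ
    have h1 : (inner ℂ ψ ((∑ t : Fin r, LinearMap.adjoint (A t) ∘ₗ A t) ψ) : ℂ)
        = ∑ t : Fin r, (inner ℂ (A t ψ) (A t ψ) : ℂ) := by
      simp [LinearMap.sum_apply, inner_sum, LinearMap.adjoint_inner_right]
    have h2 : (inner ℂ ψ ((∑ k : Fin m, rankOne (d k) (d k)) ψ) : ℂ) = 0 := by
      simp [LinearMap.sum_apply, inner_sum, inner_smul_right, hψ]
    have h0 : ∑ t : Fin r, (inner ℂ (A t ψ) (A t ψ) : ℂ) = 0 := by rw [← h1, hA, h2]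
    have h3 : ∑ t : Fin r, ‖A t ψ‖ ^ 2 = 0 := by
      have h0' : ((∑ t : Fin r, ‖A t ψ‖ ^ 2 : ℝ) : ℂ) = 0 := by
        push_cast
        simpa [inner_self_eq_norm_sq_to_K] using h0
      exact_mod_cast h0'
    have h4 := (Finset.sum_eq_zero_iff_of_nonneg (by intros; positivity)).mp h3 s
      (Finset.mem_univ s)
    have h5 : ‖A s ψ‖ = 0 := by
      have := pow_eq_zero_iff (n := 2) (by norm_num) |>.mp h4
      exact this
    simpa using h5
  have hdw : ∀ j, d j = ∑ k : Fin m, (inner ℂ (d k) (d j) : ℂ) • c k := by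
    intro j
    set w := ∑ k : Fin m, (inner ℂ (d k) (d j) : ℂ) • c k with hw
    have hwV : w ∈ V := Submodule.sum_mem _ fun k _ => Submodule.smul_mem _ _ (hcV k)
    have hperp : ∀ l, (inner ℂ (d l) (d j - w) : ℂ) = 0 := by
      intro l
      simp [hw, inner_sub_right, inner_sum, inner_smul_right, hc', mul_ite,
        Finset.sum_ite_eq, Finset.sum_ite_eq']
    have hperpall : ∀ u ∈ V, (inner ℂ u (d j - w) : ℂ) = 0 := by
      intro u hu
      induction hu using Submodule.span_induction with
      | mem x hx => obtain ⟨l, rfl⟩ := hx; exact hperp l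
      | zero => simp
      | add x y _ _ hx hy => rw [inner_add_left, hx, hy, add_zero]
      | smul a x _ hx => rw [inner_smul_left, hx, mul_zero]
    have hz : (inner ℂ (d j - w) (d j - w) : ℂ) = 0 :=
      hperpall _ (Submodule.sub_mem _ (hdV j) hwV)
    exact sub_eq_zero.mp (inner_self_eq_zero.mp hz)
  refine ⟨fun k s => A s (c k), ?_, ?_⟩
  · intro s
    apply LinearMap.ext
    intro ψ
    have hy : ψ - (V.orthogonalProjectionOnto ψ : H) ∈ Vᗮ :=
      V.sub_starProjection_mem_orthogonal ψ
    set x : H := (V.orthogonalProjectionOnto ψ : H) with hx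
    set y : H := ψ - x with hyy
    have hyk : ∀ k, (inner ℂ (d k) y : ℂ) = 0 := fun k =>
      (Submodule.mem_orthogonal V y).mp hy (d k) (hdV k)
    have hspan : ∀ z ∈ V, A s z = ∑ k : Fin m, (inner ℂ (d k) z : ℂ) • A s (c k) := by
      intro z hz
      induction hz using Submodule.span_induction with
      | mem u hu =>
        obtain ⟨j, rfl⟩ := hu
        conv_lhs => rw [hdw j]
        simp [map_sum, map_smul]
      | zero => simp
      | add a b _ _ ha hb =>
        simp [map_add, inner_add_right, add_smul, ha, hb, Finset.sum_add_distrib]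
      | smul t a _ ha =>
        simp [map_smul, inner_smul_right, ha, Finset.smul_sum, smul_smul]
    have h5 : A s ψ = A s x := by
      have hd1 : ψ = x + y := by simp [hyy]
      rw [hd1, map_add, hker s y hyk, add_zero]
    have h6 : ∀ k, (inner ℂ (d k) ψ : ℂ) = inner ℂ (d k) x := by
      intro k
      have hd1 : ψ = x + y := by simp [hyy]
      rw [hd1, inner_add_right, hyk k, add_zero]
    show A s ψ = (∑ k : Fin m, rankOne (A s (c k)) (d k)) ψ
    rw [h5, hspan x (V.orthogonalProjectionOnto ψ).2]
    simp [LinearMap.sum_apply, rankOne_apply, h6]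
  · intro k l
    calc ∑ s : Fin r, (inner ℂ (A s (c k)) (A s (c l)) : ℂ)
        = inner ℂ (c k) ((∑ s : Fin r, LinearMap.adjoint (A s) ∘ₗ A s) (c l)) := by
          simp [LinearMap.sum_apply, inner_sum, LinearMap.adjoint_inner_right]
      _ = inner ℂ (c k) ((∑ j : Fin m, rankOne (d j) (d j)) (c l)) := by rw [hA]
      _ = if k = l then 1 else 0 := by
          simp [LinearMap.sum_apply, inner_sum, inner_smul_right, hc, hc', mul_ite,
            ite_mul, Finset.sum_ite_eq, Finset.sum_ite_eq']
end

section
/- Let H be a complex inner product space, let m be a positive integer, let s ↦ φ_{ks} ∈ H for 1 ≤ k, s ≤ m, and let k ↦ s_k ∈ {1,…,m} be a function. Assume (i) ⟨φ_{a s_k}, φ_{b s_k}⟩ = δ_{ak} δ_{bk} for all 1 ≤ a, b, k ≤ m, and (ii) ∑_{s=1}^m ⟨φ_{ks}, φ_{ls}⟩ = δ_{kl} for all 1 ≤ k, l ≤ m. Then for every k and every s ≠ s_k one has φ_{ks} = 0, and ‖φ_{k s_k}‖ = 1. -/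
/-- if the Kraus vectors `φ_{ks}` (1 ≤ k, s ≤ m) of an instrument satisfy
(i) `⟨φ_{a s_k}, φ_{b s_k}⟩ = δ_{ak} δ_{bk}` and (ii) `∑_s ⟨φ_{ks}, φ_{ls}⟩ = δ_{kl}`,
then `φ_{ks} = 0` for all `s ≠ s_k` and `‖φ_{k s_k}‖ = 1`. -/
theorem stmt_10 {H : Type*} [NormedAddCommGroup H] [InnerProductSpace ℂ H]
    (m : ℕ) (hm : 0 < m) (φ : Fin m → Fin m → H) (sk : Fin m → Fin m)
    (h1 : ∀ a b k : Fin m,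
      (inner ℂ (φ a (sk k)) (φ b (sk k)) : ℂ) = if a = k ∧ b = k then 1 else 0)
    (h2 : ∀ k l : Fin m,
      ∑ s : Fin m, (inner ℂ (φ k s) (φ l s) : ℂ) = if k = l then 1 else 0) :
    (∀ k s : Fin m, s ≠ sk k → φ k s = 0) ∧ (∀ k : Fin m, ‖φ k (sk k)‖ = 1) := by
  have hnorm : ∀ k : Fin m, ‖φ k (sk k)‖ = 1 := by
    intro k
    have h := h1 k k k
    simp only [and_self, if_pos rfl] at h
    rw [inner_self_eq_norm_sq_to_K] at h
    have hr : (‖φ k (sk k)‖ : ℝ) ^ 2 = 1 := by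
      have := congrArg Complex.re h
      simpa [← Complex.ofReal_pow] using this
    nlinarith [norm_nonneg (φ k (sk k))]
  refine ⟨?_, hnorm⟩
  intro k s hs
  have h := h2 k k
  simp only [if_pos rfl] at h
  have hr : ∑ s : Fin m, ‖φ k s‖ ^ 2 = 1 := by
    have := congrArg Complex.re h
    simpa [inner_self_eq_norm_sq_to_K, ← Complex.ofReal_pow] using this
  have hsplit : ‖φ k (sk k)‖ ^ 2 + ∑ t ∈ Finset.univ.erase (sk k), ‖φ k t‖ ^ 2 = 1 := by
    exact (Finset.add_sum_erase Finset.univ (fun t => ‖φ k t‖ ^ 2)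
      (Finset.mem_univ (sk k))).trans hr
  rw [hnorm k, one_pow] at hsplit
  have hz : ∑ t ∈ Finset.univ.erase (sk k), ‖φ k t‖ ^ 2 = 0 := by linarith
  have := Finset.sum_eq_zero_iff_of_nonneg (fun t _ => sq_nonneg ‖φ k t‖) |>.mp hz s
    (Finset.mem_erase.mpr ⟨hs, Finset.mem_univ _⟩)
  have : ‖φ k s‖ = 0 := by nlinarith [norm_nonneg (φ k s)]
  simpa using this
end
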